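/- Let M be an irreducible semimodule over a semiring R, with representation T : R → End(M). Then the commuting semiring C(M) = {f ∈ End(M) : f ∘ T_r = T_r ∘ f for all r ∈ R} is a semifield: every nonzero element of C(M) is invertible. -/

import Mathlib

/-- Schur's lemma for semirings: if `M` is an irreducible semimodule over a
semiring `R` (given by a representation `T : R → End M`), then every nonzero
element of the commuting semiring
`C(M) = {f ∈ End M : f ∘ T r = T r ∘ f for all r}` is invertible in `C(M)`,
i.e. `C(M)` is a semifield. -/
theorem schur_commuting_semifield {R M : Type} [NonUnitalSemiring R] [AddCommMonoid M]
    (T : R →ₙ+* AddMonoid.End M)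
    -- `R M ≠ {0}`
    (hRM : ∃ (r : R) (x : M), T r x ≠ 0)
    -- only trivial subsemimodules
    (hsub : ∀ N : AddSubmonoid M, (∀ (r : R), ∀ x ∈ N, T r x ∈ N) → N = ⊥ ∨ N = ⊤)
    -- only trivial semimodule congruences
    (hquot : ∀ c : AddCon M, (∀ (r : R) (x y : M), c x y → c (T r x) (T r y)) →
      (∀ x y : M, c x y → x = y) ∨ (∀ x y : M, c x y)) :
    ∀ f : AddMonoid.End M, (∀ r : R, f * T r = T r * f) → f ≠ 0 →
      ∃ g : AddMonoid.End M, (∀ r : R, g * T r = T r * g) ∧ f * g = 1 ∧ g * f = 1 := by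
  intro f hcomm hf0
  have hcomm' : ∀ (r : R) (x : M), f (T r x) = T r (f x) := by
    intro r x
    exact congrFun (congrArg (DFunLike.coe) (hcomm r)) x
  -- surjectivity
  have hsurj : Function.Surjective f := by
    have hclosed : ∀ (r : R), ∀ x ∈ AddMonoidHom.mrange (f : M →+ M), T r x ∈ AddMonoidHom.mrange (f : M →+ M) := by
      rintro r x ⟨y, rfl⟩
      exact ⟨T r y, hcomm' r y⟩
    rcases hsub _ hclosed with h | h
    · exfalso
      apply hf0
      refine AddMonoidHom.ext fun x => ?_
      have : f x ∈ AddMonoidHom.mrange (f : M →+ M) := ⟨x, rfl⟩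
      rw [h] at this
      exact (by simpa using this : f x = 0)
    · intro y
      have : y ∈ AddMonoidHom.mrange (f : M →+ M) := by rw [h]; trivial
      exact this
  -- injectivity
  have hinj : Function.Injective f := by
    have hker : ∀ (r : R) (x y : M), AddCon.ker (f : M →+ M) x y →
        AddCon.ker (f : M →+ M) (T r x) (T r y) := by
      intro r x y h
      have h' : f x = f y := h
      show f (T r x) = f (T r y)
      rw [hcomm' r x, hcomm' r y, h']
    rcases hquot _ hker with h | h
    · intro x y hxy
      exact h x y hxy
    · exfalso
      apply hf0
      refine AddMonoidHom.ext fun x => ?_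
      have : f x = f 0 := h x 0
      exact (by simpa using this : f x = 0)
  set e := AddEquiv.ofBijective (f : M →+ M) ⟨hinj, hsurj⟩ with he
  refine ⟨(e.symm : M →+ M), ?_, ?_, ?_⟩
  · intro r
    refine AddMonoidHom.ext fun x => ?_
    apply hinj
    show f (e.symm (T r x)) = f (T r (e.symm x))
    have h1 : f (e.symm (T r x)) = T r x := e.apply_symm_apply (T r x)
    have h2 : f (e.symm x) = x := e.apply_symm_apply x
    rw [h1, hcomm' r (e.symm x), h2]
  · refine AddMonoidHom.ext fun x => ?_
    exact e.apply_symm_apply x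
  · refine AddMonoidHom.ext fun x => ?_
    exact e.symm_apply_apply x
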